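/- Let R be a finite commutative ring with identity admitting a generating character, let χ be any generating character of R, and let α : Rⁿ → (Rⁿ)̂, v ↦ χ_v with χ_v(a) = χ(v·a), be the induced isomorphism. For a partition 𝒫 of Rⁿ define the χ-dual partition 𝒫̂^[χ] = α^{-1}(𝒫̂), a partition of Rⁿ. Then the χ-bidual partition (𝒫̂^[χ])̂^[χ] equals the character-theoretic bidual 𝒫̂̂ of 𝒫 (viewed as a partition of Rⁿ via the canonical identification of the double character group with Rⁿ); in particular, the bidual partition does not depend on the choice of the generating character χ. -/

import Mathlib

open Finset
open scoped Classical

variable {R : Type*} [CommRing R] [Fintype R]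

/-- `χ` is a generating character of the finite commutative ring `R`:  the map `r ↦ r·χ`
(where `(r·χ)(a) = χ(r·a)`) is an `R`-module isomorphism from `R` to the character module
`R̂` (bijective, additive, and compatible with the scalar multiplications). -/
def IsGeneratingChar (χ : AddChar R ℂ) : Prop :=
  Function.Bijective (fun r : R => χ.mulShift r) ∧
  (∀ r s : R, χ.mulShift (r + s) = χ.mulShift r * χ.mulShift s) ∧
  (∀ r s a : R, χ.mulShift (r * s) a = χ.mulShift s (r * a))

/-- The character `χ_v : a ↦ χ(v·a)` of `(Rⁿ, +)`, where `v·a = Σ_i v_i a_i` is the dot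
product. -/
noncomputable def dotChar {n : ℕ} (χ : AddChar R ℂ) (v : Fin n → R) :
    AddChar (Fin n → R) ℂ :=
  χ.compAddMonoidHom
    { toFun := fun a => ∑ i, v i * a i
      map_zero' := by simp
      map_add' := fun a b => by simp [mul_add, Finset.sum_add_distrib] }

/-- The sum of the character `χ` over the block of the partition `P` indexed by `c`. -/
noncomputable def blockSum {G : Type*} [AddCommGroup G] [Fintype G]
    (P : Setoid G) (χ : AddChar G ℂ) (c : Quotient P) : ℂ :=
  ∑ g : G, if Quotient.mk P g = c then χ g else 0

/-- The dual partition `P̂` of the character group. -/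
noncomputable def dualSetoid {G : Type*} [AddCommGroup G] [Fintype G]
    (P : Setoid G) : Setoid (AddChar G ℂ) :=
  Setoid.ker (blockSum P)

/-- The sum `Σ_{χ ∈ Q_c} χ(g)` over the block of the dual partition indexed by `c`. -/
noncomputable def dualBlockSum {G : Type*} [AddCommGroup G] [Fintype G]
    (P : Setoid G) (g : G) (c : Quotient (dualSetoid P)) : ℂ :=
  ∑ᶠ χ : AddChar G ℂ, if Quotient.mk (dualSetoid P) χ = c then χ g else 0

/-- The bidual partition `P̂̂`, a partition of `G` via the canonical identification of the
double character group with `G`. -/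
noncomputable def bidualSetoid {G : Type*} [AddCommGroup G] [Fintype G]
    (P : Setoid G) : Setoid G :=
  Setoid.ker (dualBlockSum P)

/-- The `χ`-dual partition `P̂^[χ] = α⁻¹(P̂)` of a partition `P` of `Rⁿ`, where
`α : v ↦ χ_v` is the identification of `Rⁿ` with its character module induced by the
generating character `χ`. -/
noncomputable def chiDual {n : ℕ} (χ : AddChar R ℂ) (P : Setoid (Fin n → R)) :
    Setoid (Fin n → R) :=
  Setoid.comap (fun v => dotChar χ v) (dualSetoid P)


section Aux
variable {n : ℕ}

lemma addchar_map_sum {A M : Type*} [AddCommMonoid A] [CommMonoid M] (ψ : AddChar A M)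
    {ι : Type*} (s : Finset ι) (f : ι → A) :
    ψ (∑ i ∈ s, f i) = ∏ i ∈ s, ψ (f i) := by
  classical
  induction s using Finset.induction with
  | empty => simp
  | insert _ _ h ih => rw [Finset.sum_insert h, Finset.prod_insert h, ψ.map_add_eq_mul, ih]

lemma dotChar_apply (χ : AddChar R ℂ) (v a : Fin n → R) :
    dotChar χ v a = χ (∑ i, v i * a i) := rfl

lemma dotChar_symm (χ : AddChar R ℂ) (v a : Fin n → R) :
    dotChar χ v a = dotChar χ a v := by
  simp only [dotChar_apply]
  congr 1
  exact Finset.sum_congr rfl fun i _ => mul_comm _ _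

lemma dotChar_single (χ : AddChar R ℂ) (v : Fin n → R) (i : Fin n) (a : R) :
    dotChar χ v (Pi.single i a) = χ (v i * a) := by
  rw [dotChar_apply]
  congr 1
  rw [Finset.sum_eq_single i]
  · simp
  · intro j _ hj
    simp [Pi.single_apply, hj]
  · simp

lemma alpha_bijective (χ : AddChar R ℂ) (hχ : IsGeneratingChar χ) :
    Function.Bijective (fun v : Fin n → R => dotChar χ v) := by
  constructor
  · intro v w hvw
    funext i
    apply hχ.1.1
    ext a
    have h1 := DFunLike.congr_fun hvw (Pi.single i a)
    simpa only [dotChar_single, AddChar.mulShift_apply] using h1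
  · intro ψ
    have hsel : ∀ i : Fin n, ∃ r : R,
        χ.mulShift r = ψ.compAddMonoidHom (AddMonoidHom.single (fun _ : Fin n => R) i) :=
      fun i => hχ.1.2 _
    choose v hv using hsel
    refine ⟨v, ?_⟩
    ext a
    have h2 : a = ∑ i, Pi.single i (a i) := (Finset.univ_sum_single a).symm
    rw [dotChar_apply, addchar_map_sum]
    conv_rhs => rw [h2]
    rw [addchar_map_sum]
    refine Finset.prod_congr rfl fun i _ => ?_
    have := DFunLike.congr_fun (hv i) (a i)
    simpa only [AddChar.mulShift_apply, AddChar.compAddMonoidHom_apply,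
      AddMonoidHom.single_apply] using this

end Aux


lemma key_blockSum {n : ℕ} (χ : AddChar R ℂ) (hχ : IsGeneratingChar χ)
    (P : Setoid (Fin n → R)) (g w : Fin n → R) :
    dualBlockSum P g (Quotient.mk (dualSetoid P) (dotChar χ w)) =
      blockSum (chiDual χ P) (dotChar χ g) (Quotient.mk (chiDual χ P) w) := by
  have hre := finsum_eq_of_bijective (fun v : Fin n → R => dotChar χ v)
    (alpha_bijective χ hχ)
    (f := fun v : Fin n → R =>
      if Quotient.mk (dualSetoid P) (dotChar χ v) = Quotient.mk (dualSetoid P) (dotChar χ w)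
        then dotChar χ v g else 0)
    (g := fun ψ : AddChar (Fin n → R) ℂ =>
      if Quotient.mk (dualSetoid P) ψ = Quotient.mk (dualSetoid P) (dotChar χ w)
        then ψ g else 0)
    (fun v => rfl)
  rw [dualBlockSum, ← hre, finsum_eq_sum_of_fintype, blockSum]
  refine Finset.sum_congr rfl fun v _ => ?_
  have hcond : (Quotient.mk (dualSetoid P) (dotChar χ v) =
      Quotient.mk (dualSetoid P) (dotChar χ w)) ↔
      (Quotient.mk (chiDual χ P) v = Quotient.mk (chiDual χ P) w) := by
    constructor
    · intro hvw
      have h2 : (dualSetoid P) (dotChar χ v) (dotChar χ w) := Quotient.exact hvw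
      exact Quotient.sound h2
    · intro hvw
      have h2 : (chiDual χ P) v w := Quotient.exact hvw
      exact Quotient.sound (show (dualSetoid P) (dotChar χ v) (dotChar χ w) from h2)
  exact if_congr hcond (dotChar_symm χ v g) rfl

/-- The `χ`-bidual of a partition `P` of `Rⁿ` equals the character-theoretic bidual of
`P`; in particular it does not depend on the choice of the generating character `χ`. -/
theorem chiDual_chiDual_eq_bidual (n : ℕ) (χ : AddChar R ℂ) (hχ : IsGeneratingChar χ)
    (P : Setoid (Fin n → R)) :
    chiDual χ (chiDual χ P) = bidualSetoid P := by
  apply Setoid.ext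
  intro g h
  have hsur := (alpha_bijective (n := n) χ hχ).2
  constructor
  · intro hr
    show dualBlockSum P g = dualBlockSum P h
    funext c
    obtain ⟨ψ, rfl⟩ := Quotient.exists_rep c
    obtain ⟨w, rfl⟩ := hsur ψ
    rw [key_blockSum χ hχ P g w, key_blockSum χ hχ P h w]
    have hb : blockSum (chiDual χ P) (dotChar χ g) = blockSum (chiDual χ P) (dotChar χ h) := hr
    rw [hb]
  · intro hr
    show blockSum (chiDual χ P) (dotChar χ g) = blockSum (chiDual χ P) (dotChar χ h)
    funext c
    obtain ⟨w, rfl⟩ := Quotient.exists_rep c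
    rw [← key_blockSum χ hχ P g w, ← key_blockSum χ hχ P h w]
    have hb : dualBlockSum P g = dualBlockSum P h := hr
    rw [hb]
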